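/- arXiv:2208.02636 — 7 statements merged into one kernel-verified Lean document; each statement's English description precedes it below -/
import Mathlib

section
/- Let λ ∈ ℂ*, a, b ∈ ℂ, q ∈ ℕ, and τ_0,…,τ_q ∈ tℂ[t]. Define Y_m · f(s,t,v) = λ^m [ (m·Σ_{i=0}^q τ_i v^i + v + a m² t + (1-δ_{m,0}) b) f(s+m,t,v) + m t ∂f/∂v(s+m,t,v) ] and M_m · f(s,t,v) = λ^m t f(s+m,t,v). Then for all m, n ∈ ℤ: Y_m·(Y_n·f) - Y_n·(Y_m·f) = (m-n)·M_{m+n}·f, i.e. the relation [Y_m, Y_n] = (m-n)M_{m+n} holds on ℂ[s,t,v]. -/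
open MvPolynomial

noncomputable section

/-- `ℂ[s,t,v]` with `s = X 0`, `t = X 1`, `v = X 2`. -/
abbrev R3 : Type := MvPolynomial (Fin 3) ℂ

/-- The shift `f(s,t,v) ↦ f(s+m,t,v)`. -/
def shiftS (m : ℤ) : R3 →ₐ[ℂ] R3 :=
  aeval (fun i => if i = 0 then X 0 + C (m : ℂ) else X i)

/-- Embedding `ℂ[t] → ℂ[s,t,v]`, `t ↦ X 1`. -/
def tp (p : Polynomial ℂ) : R3 := Polynomial.aeval (X 1 : R3) p

/-- The action `M_m · f(s,t,v) = λ^m t f(s+m,t,v)`. -/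
def Mact (lam : ℂ) (m : ℤ) (f : R3) : R3 := lam ^ m • (X 1 * shiftS m f)

/-- The action
`Y_m · f = λ^m [(m Σ_{i=0}^q τ_i v^i + v + a m² t + (1-δ_{m,0}) b) f(s+m,t,v)
  + m t ∂f/∂v(s+m,t,v)]`. -/
def Yact (lam a b : ℂ) (q : ℕ) (τ : ℕ → Polynomial ℂ) (m : ℤ) (f : R3) : R3 :=
  lam ^ m •
    (((m : ℂ) • (∑ i ∈ Finset.range (q + 1), tp (τ i) * X 2 ^ i) + X 2
        + C (a * (m : ℂ) ^ 2) * X 1 + C (if m = 0 then 0 else b)) * shiftS m f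
      + (m : ℂ) • (X 1 * pderiv 2 (shiftS m f)))

lemma shiftS_X0 (m : ℤ) : shiftS m (X 0) = X 0 + C (m : ℂ) := by simp [shiftS]
lemma shiftS_X1 (m : ℤ) : shiftS m (X 1) = X 1 := by simp [shiftS]
lemma shiftS_X2 (m : ℤ) : shiftS m (X 2) = X 2 := by simp [shiftS]
lemma shiftS_C (m : ℤ) (c : ℂ) : shiftS m (C c) = C c := by simp [shiftS, algebraMap_eq]
lemma shiftS_tp (m : ℤ) (p : Polynomial ℂ) : shiftS m (tp p) = tp p := by
  rw [tp, ← Polynomial.aeval_algHom_apply, shiftS_X1]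

lemma shiftS_comp (m n : ℤ) (f : R3) : shiftS m (shiftS n f) = shiftS (m + n) f := by
  have h : (shiftS m).comp (shiftS n) = shiftS (m + n) := by
    apply MvPolynomial.algHom_ext
    intro i
    fin_cases i <;> simp [shiftS, algebraMap_eq] <;> push_cast <;> ring
  exact AlgHom.congr_fun h f

lemma pderiv_shiftS (m : ℤ) (f : R3) :
    pderiv 2 (shiftS m f) = shiftS m (pderiv 2 f) := by
  induction f using MvPolynomial.induction_on with
  | C a => simp [shiftS_C]
  | add p q hp hq => simp [map_add, hp, hq]
  | mul_X p i hp =>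
    rw [map_mul, pderiv_mul, hp, pderiv_mul, map_add, map_mul]
    fin_cases i <;>
      simp [shiftS_X0, shiftS_X1, shiftS_X2, shiftS_C, pderiv_X, Pi.single_apply]

lemma pderiv_tp (p : Polynomial ℂ) : pderiv 2 (tp p) = 0 := by
  induction p using Polynomial.induction_on with
  | C a => simp [tp]
  | add p q hp hq => simp only [tp, map_add] at hp hq ⊢; simp [hp, hq]
  | monomial n a hn =>
    simp [tp, pderiv_mul, pderiv_X, Pi.single_apply]

lemma pd2_X0 : pderiv (2 : Fin 3) (X 0 : R3) = 0 := pderiv_X_of_ne (by decide)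
lemma pd2_X1 : pderiv (2 : Fin 3) (X 1 : R3) = 0 := pderiv_X_of_ne (by decide)
lemma pd2_X2 : pderiv (2 : Fin 3) (X 2 : R3) = 1 := pderiv_X_self 2

/-- For `λ ∈ ℂ*`, `a, b ∈ ℂ`, `q ∈ ℕ`, `τ_0, …, τ_q ∈ tℂ[t]`, the operators
`Y_m` and `M_m` on `ℂ[s,t,v]` satisfy `[Y_m, Y_n] = (m-n) M_{m+n}`. -/
theorem stmt_6 (lam : ℂ) (hlam : lam ≠ 0) (a b : ℂ) (q : ℕ)
    (τ : ℕ → Polynomial ℂ) (hτ : ∀ i ≤ q, Polynomial.X ∣ τ i) :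
    ∀ (m n : ℤ) (f : R3),
      Yact lam a b q τ m (Yact lam a b q τ n f)
        - Yact lam a b q τ n (Yact lam a b q τ m f)
      = ((m : ℂ) - (n : ℂ)) • Mact lam (m + n) f := by
  intro m n f
  set T : R3 := ∑ i ∈ Finset.range (q + 1), tp (τ i) * X 2 ^ i with hT
  have hsT : ∀ k : ℤ, shiftS k T = T := by
    intro k
    simp [hT, map_sum, shiftS_tp, shiftS_X2]
  have hsT' : ∀ k : ℤ, shiftS k (pderiv 2 T) = pderiv 2 T := by
    intro k; rw [← pderiv_shiftS, hsT]
  have hnm : shiftS (n + m) = shiftS (m + n) := by rw [add_comm]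
  simp only [Yact, Mact]
  rw [← hT]
  simp only [Yact, Mact, map_add, map_mul, map_smul, Derivation.map_smul, smul_add,
    hsT, hsT', shiftS_X1, shiftS_X2, shiftS_C, shiftS_tp, pderiv_shiftS, shiftS_comp,
    hnm, pderiv_mul, pderiv_C, pd2_X0, pd2_X1, pd2_X2]
  rw [show lam ^ (m + n) = lam ^ m * lam ^ n from zpow_add₀ hlam m n]
  simp only [smul_eq_C_mul, map_mul, map_sub, map_add, map_pow]
  ring

end
end

section
/- Let λ ∈ ℂ*, a, b ∈ ℂ, q ∈ ℕ, and τ_0,…,τ_q ∈ tℂ[t]. With the actions Y_m·f = λ^m[(mΣτ_iv^i + v + am²t + (1-δ_{m,0})b)f(s+m) + mt ∂_v f(s+m)] and M_n·f = λ^n t f(s+n), one has Y_m·(M_n·f) - M_n·(Y_m·f) = 0 for all m, n ∈ ℤ and f ∈ ℂ[s,t,v], consistent with [Y_m, M_n] = 0. -/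
open MvPolynomial

noncomputable section

lemma shiftS_shiftS (m n : ℤ) (f : R3) : shiftS m (shiftS n f) = shiftS (m+n) f := by
  have : (shiftS m).comp (shiftS n) = shiftS (m+n) := by
    apply algHom_ext
    intro i
    fin_cases i <;> simp [shiftS, map_add, algHom_C] <;> ring
  exact AlgHom.congr_fun this f
/-- For `λ ∈ ℂ*`, `a, b ∈ ℂ`, `q ∈ ℕ`, `τ_0, …, τ_q ∈ tℂ[t]`, the operators
`Y_m` and `M_n` on `ℂ[s,t,v]` commute, consistent with `[Y_m, M_n] = 0`. -/
theorem stmt_7 (lam : ℂ) (hlam : lam ≠ 0) (a b : ℂ) (q : ℕ)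
    (τ : ℕ → Polynomial ℂ) (hτ : ∀ i ≤ q, Polynomial.X ∣ τ i) :
    ∀ (m n : ℤ) (f : R3),
      Yact lam a b q τ m (Mact lam n f) - Mact lam n (Yact lam a b q τ m f) = 0 := by
  intro m n f
  rw [sub_eq_zero]
  simp only [Yact, Mact, map_smul, map_mul, map_add, map_sum, map_pow,
    shiftS_tp, shiftS_X1, shiftS_X2, shiftS_C, shiftS_shiftS, pderiv_shiftS,
    pderiv_mul, smul_eq_C_mul]
  have h1 : pderiv 2 (X 1 : R3) = 0 := by simp [pderiv_X]
  have h2 : pderiv 2 (C (lam ^ n) : R3) = 0 := by simp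
  rw [h1, h2, show m + n = n + m from add_comm m n]
  ring
end
end

section
/- Let B be a 𝔱𝔰𝔳-module that is free of rank 1 as a module over U(ℂL_0 ⊕ ℂM_0 ⊕ ℂY_0) ≅ ℂ[L_0, M_0, Y_0]. Writing M_m·1 = a_m(L_0,M_0,Y_0), then a_m ≠ 0 for every m ∈ ℤ. -/
open MvPolynomial

/-- Lemma 3.2: Let `B` be a 𝔱𝔰𝔳-module that is free of rank 1 over
`U(ℂL₀ ⊕ ℂM₀ ⊕ ℂY₀) ≅ ℂ[L₀, M₀, Y₀]`; we identify `B` with the polynomial ring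
`ℂ[L₀, M₀, Y₀] = MvPolynomial (Fin 3) ℂ` (with `L₀ = X 0`, `M₀ = X 1`, `Y₀ = X 2`),
the 𝔱𝔰𝔳-action being given by linear endomorphisms `L m`, `Y m`, `M m` satisfying the
commutation relations of 𝔱𝔰𝔳, with `L 0`, `M 0`, `Y 0` acting by multiplication by
the respective variables. Then `a_m = M_m · 1 ≠ 0` for every `m ∈ ℤ`. -/
theorem stmt_10
    (L Y M : ℤ → Module.End ℂ (MvPolynomial (Fin 3) ℂ))
    (hLL : ∀ m n : ℤ, ⁅L m, L n⁆ = ((m : ℂ) - (n : ℂ)) • L (m + n))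
    (hLY : ∀ m n : ℤ, ⁅L m, Y n⁆ = (-((m : ℂ) + (n : ℂ))) • Y (m + n))
    (hLM : ∀ m n : ℤ, ⁅L m, M n⁆ = (-(3 * (m : ℂ) + (n : ℂ))) • M (m + n))
    (hYY : ∀ m n : ℤ, ⁅Y m, Y n⁆ = ((m : ℂ) - (n : ℂ)) • M (m + n))
    (hYM : ∀ m n : ℤ, ⁅Y m, M n⁆ = 0)
    (hMM : ∀ m n : ℤ, ⁅M m, M n⁆ = 0)
    (hL0 : ∀ f : MvPolynomial (Fin 3) ℂ, L 0 f = X 0 * f)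
    (hM0 : ∀ f : MvPolynomial (Fin 3) ℂ, M 0 f = X 1 * f)
    (hY0 : ∀ f : MvPolynomial (Fin 3) ℂ, Y 0 f = X 2 * f) :
    ∀ m : ℤ, M m 1 ≠ 0 := by
  intro m hm
  have hX1ne : (X 1 : MvPolynomial (Fin 3) ℂ) ≠ 0 := X_ne_zero 1
  by_cases h0 : m = 0
  · subst h0
    have := hM0 1
    rw [hm, mul_one] at this
    exact hX1ne this.symm
  -- commutation with multiplication by the three variables
  · have hc0 : ∀ f, M m (X 0 * f) = X 0 * M m f + (m : ℂ) • M m f := by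
      intro f
      have h := congrFun (congrArg DFunLike.coe (hLM 0 m)) f
      simp only [Ring.lie_def, LinearMap.sub_apply, Module.End.mul_apply,
        LinearMap.smul_apply, zero_add] at h
      rw [hL0, hL0] at h
      simp only [Int.cast_zero, mul_zero, zero_add] at h
      simp only [smul_eq_C_mul, map_neg] at h ⊢
      linear_combination -h
    have hc1 : ∀ f, M m (X 1 * f) = X 1 * M m f := by
      intro f
      have h := congrFun (congrArg DFunLike.coe (hMM 0 m)) f
      simp only [Ring.lie_def, LinearMap.sub_apply, Module.End.mul_apply,
        LinearMap.zero_apply] at h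
      rw [hM0, hM0] at h
      linear_combination -h
    have hc2 : ∀ f, M m (X 2 * f) = X 2 * M m f := by
      intro f
      have h := congrFun (congrArg DFunLike.coe (hYM 0 m)) f
      simp only [Ring.lie_def, LinearMap.sub_apply, Module.End.mul_apply,
        LinearMap.zero_apply] at h
      rw [hY0, hY0] at h
      linear_combination -h
    have key : ∀ f, M m f = 0 := by
      intro f
      induction f using MvPolynomial.induction_on with
      | C a =>
          have : (C a : MvPolynomial (Fin 3) ℂ) = a • 1 := by
            rw [smul_eq_C_mul, mul_one]
          rw [this, map_smul, hm, smul_zero]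
      | add p q hp hq => rw [map_add, hp, hq, add_zero]
      | mul_X p n hp =>
          fin_cases n
          · rw [mul_comm]; show M m (X 0 * p) = 0
            rw [hc0, hp, mul_zero, smul_zero, add_zero]
          · rw [mul_comm]; show M m (X 1 * p) = 0
            rw [hc1, hp, mul_zero]
          · rw [mul_comm]; show M m (X 2 * p) = 0
            rw [hc2, hp, mul_zero]
    have hMz : M m = 0 := LinearMap.ext key
    have h := congrFun (congrArg DFunLike.coe (hLM (-m) m)) 1
    rw [hMz] at h
    simp only [Ring.lie_def, mul_zero, zero_mul, sub_zero, neg_add_cancel,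
      LinearMap.zero_apply, LinearMap.smul_apply, LinearMap.sub_apply,
      Module.End.mul_apply, map_zero, zero_sub, neg_eq_zero] at h
    rw [hM0, mul_one] at h
    have hcoef : (-(3 * ((-m : ℤ) : ℂ) + (m : ℂ))) ≠ 0 := by
      push_cast
      intro hc
      apply h0
      have : (2 * (m : ℂ)) = 0 := by linear_combination hc
      exact_mod_cast mul_eq_zero.mp this |>.resolve_left (by norm_num)
    rcases smul_eq_zero.mp h.symm with hc | hc
    · exact hcoef hc
    · exact hX1ne hc
end

section
/- Let B = ℂ[L_0,M_0,Y_0] be a rank-1 free U(ℂL_0⊕ℂM_0⊕ℂY_0)-module over 𝔱𝔰𝔳 with M_m·1 = a_m(L_0,M_0,Y_0) ≠ 0 for all m. Then each a_m does not involve L_0, i.e. a_m ∈ ℂ[M_0,Y_0] \ {0}. -/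
open MvPolynomial

open Polynomial in
lemma tsv_taylor_coeff_aux {R : Type*} [CommRing R] (p : R[X]) (c : R) (e : ℕ)
    (h : p.natDegree ≤ e + 1) :
    (Polynomial.taylor c p).coeff e = p.coeff e + ((e : R) + 1) * c * p.coeff (e + 1) := by
  rw [Polynomial.taylor_coeff]
  have hd : (Polynomial.hasseDeriv e p).natDegree < 2 := by
    have := Polynomial.natDegree_hasseDeriv_le p e
    omega
  rw [Polynomial.eval_eq_sum_range' hd]
  rw [Finset.sum_range_succ, Finset.sum_range_succ, Finset.sum_range_zero]
  simp only [Polynomial.hasseDeriv_coeff, zero_add, Nat.choose_self, Nat.cast_one, one_mul,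
    pow_zero, mul_one, pow_one]
  have : (1 + e).choose e = e + 1 := by
    rw [Nat.choose_symm_of_eq_add (by omega : 1 + e = e + 1)]; rw [Nat.choose_one_right]; omega
  rw [this]
  push_cast
  ring


open Polynomial in
lemma tsv_taylor_coeff_top {R : Type*} [CommRing R] (p : R[X]) (c : R) (e : ℕ)
    (h : p.natDegree ≤ e) :
    (Polynomial.taylor c p).coeff e = p.coeff e := by
  rw [Polynomial.taylor_coeff]
  have hd : (Polynomial.hasseDeriv e p).natDegree < 1 := by
    have := Polynomial.natDegree_hasseDeriv_le p e
    omega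
  rw [Polynomial.eval_eq_sum_range' hd]
  simp [Polynomial.hasseDeriv_coeff]


open Polynomial in
lemma tsv_coeff_mul_aux {R : Type*} [CommRing R] (p q : R[X]) (a b : ℕ)
    (hp : p.natDegree ≤ a + 1) (hq : q.natDegree ≤ b + 1) :
    (p * q).coeff (a + b + 1)
      = p.coeff (a + 1) * q.coeff b + p.coeff a * q.coeff (b + 1) := by
  rw [Polynomial.coeff_mul]
  have hsub : ({(a + 1, b), (a, b + 1)} : Finset (ℕ × ℕ)) ⊆ Finset.HasAntidiagonal.antidiagonal (a + b + 1) := by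
    intro x hx
    simp only [Finset.mem_insert, Finset.mem_singleton] at hx
    rcases hx with h | h <;> subst h <;> simp [Finset.mem_antidiagonal] <;> omega
  rw [← Finset.sum_subset hsub]
  · rw [Finset.sum_insert (by simp), Finset.sum_singleton]
  · intro x hx hnx
    simp only [Finset.HasAntidiagonal.mem_antidiagonal] at hx
    simp only [Finset.mem_insert, Finset.mem_singleton] at hnx
    push_neg at hnx
    obtain ⟨h1, h2⟩ := hnx
    rcases lt_or_ge (a + 1) x.1 with h | h
    · rw [Polynomial.coeff_eq_zero_of_natDegree_lt (lt_of_le_of_lt hp h), zero_mul]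
    · have : b + 1 < x.2 := by
        have hx1 : x.1 ≠ a + 1 ∨ x.2 ≠ b := not_and_or.mp (by simpa [Prod.ext_iff] using h1)
        have hx2 : x.1 ≠ a ∨ x.2 ≠ b + 1 := not_and_or.mp (by simpa [Prod.ext_iff] using h2)
        omega
      rw [Polynomial.coeff_eq_zero_of_natDegree_lt (lt_of_le_of_lt hq this), mul_zero]


open Polynomial in
lemma tsv_key0 {R : Type*} [CommRing R] [IsDomain R] (p q : R[X]) (hp : p ≠ 0) (hq : q ≠ 0)
    (c d : R) (h : Polynomial.taylor c p * q = Polynomial.taylor d q * p)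
    (hq0 : q.natDegree = 0) : (p.natDegree : R) * c = 0 := by
  have hqC : Polynomial.taylor d q = q := by
    conv_lhs => rw [Polynomial.eq_C_of_natDegree_eq_zero hq0]
    rw [Polynomial.taylor_apply, Polynomial.C_comp, ← Polynomial.eq_C_of_natDegree_eq_zero hq0]
  rw [hqC] at h
  have htp : Polynomial.taylor c p = p := by
    have := mul_right_cancel₀ hq (by rw [h]; ring : Polynomial.taylor c p * q = p * q)
    exact this
  rcases Nat.eq_zero_or_pos p.natDegree with h0 | h0
  · rw [h0]; simp
  · obtain ⟨e, he⟩ : ∃ e, p.natDegree = e + 1 := ⟨p.natDegree - 1, by omega⟩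
    have h1 := tsv_taylor_coeff_aux p c e (le_of_eq he)
    rw [htp] at h1
    have h2 : ((e : R) + 1) * c * p.coeff (e + 1) = 0 := by linear_combination -h1
    have h3 : p.coeff (e + 1) ≠ 0 := by
      rw [← he]; exact Polynomial.leadingCoeff_ne_zero.mpr hp
    have h4 : ((e : R) + 1) * c = 0 := by
      rcases mul_eq_zero.mp h2 with h | h
      · exact h
      · exact absurd h h3
    rw [he]
    push_cast
    linear_combination h4


open Polynomial in
lemma tsv_key {R : Type*} [CommRing R] [IsDomain R] (p q : R[X]) (hp : p ≠ 0) (hq : q ≠ 0)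
    (c d : R) (h : Polynomial.taylor c p * q = Polynomial.taylor d q * p) :
    (p.natDegree : R) * c = (q.natDegree : R) * d := by
  rcases Nat.eq_zero_or_pos q.natDegree with hq0 | hq0
  · rw [hq0, tsv_key0 p q hp hq c d h hq0]; simp
  rcases Nat.eq_zero_or_pos p.natDegree with hp0 | hp0
  · rw [hp0, tsv_key0 q p hq hp d c h.symm hp0]; simp
  obtain ⟨a, ha⟩ : ∃ a, p.natDegree = a + 1 := ⟨p.natDegree - 1, by omega⟩
  obtain ⟨b, hb⟩ : ∃ b, q.natDegree = b + 1 := ⟨q.natDegree - 1, by omega⟩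
  have hpa : p.natDegree ≤ a + 1 := le_of_eq ha
  have hqb : q.natDegree ≤ b + 1 := le_of_eq hb
  have htpa : (Polynomial.taylor c p).natDegree ≤ a + 1 := by
    rw [Polynomial.natDegree_taylor]; exact hpa
  have htqb : (Polynomial.taylor d q).natDegree ≤ b + 1 := by
    rw [Polynomial.natDegree_taylor]; exact hqb
  have hL := tsv_coeff_mul_aux (Polynomial.taylor c p) q a b htpa hqb
  have hR := tsv_coeff_mul_aux (Polynomial.taylor d q) p b a htqb hpa
  rw [tsv_taylor_coeff_top p c (a+1) hpa, tsv_taylor_coeff_aux p c a hpa] at hL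
  rw [tsv_taylor_coeff_top q d (b+1) hqb, tsv_taylor_coeff_aux q d b hqb] at hR
  have hcoeff : (Polynomial.taylor c p * q).coeff (a + b + 1)
      = (Polynomial.taylor d q * p).coeff (a + b + 1) := by rw [h]
  have hba : b + a + 1 = a + b + 1 := by omega
  rw [hL] at hcoeff
  rw [hba] at hR
  rw [hR] at hcoeff
  have hkey : ((a : R) + 1) * c * (p.coeff (a + 1) * q.coeff (b + 1))
      = ((b : R) + 1) * d * (p.coeff (a + 1) * q.coeff (b + 1)) := by linear_combination hcoeff
  have hne : p.coeff (a + 1) * q.coeff (b + 1) ≠ 0 := by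
    apply mul_ne_zero
    · rw [← ha]; exact Polynomial.leadingCoeff_ne_zero.mpr hp
    · rw [← hb]; exact Polynomial.leadingCoeff_ne_zero.mpr hq
  have := mul_right_cancel₀ hne hkey
  rw [ha, hb]
  push_cast
  linear_combination this


/-- Lemma 3.3: Let `B = ℂ[L₀, M₀, Y₀]` (identified with `MvPolynomial (Fin 3) ℂ`,
`L₀ = X 0`, `M₀ = X 1`, `Y₀ = X 2`) be a rank-1 free `U(ℂL₀ ⊕ ℂM₀ ⊕ ℂY₀)`-module over
𝔱𝔰𝔳, the action being given by endomorphisms `L m`, `Y m`, `M m` satisfying the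
commutation relations of 𝔱𝔰𝔳, with `L 0`, `M 0`, `Y 0` acting by multiplication by the
variables, and suppose `a_m = M_m · 1 ≠ 0` for all `m`. Then each `a_m` does not
involve `L₀`, i.e. `a_m ∈ ℂ[M₀, Y₀] \ {0}`. -/
theorem stmt_11
    (L Y M : ℤ → Module.End ℂ (MvPolynomial (Fin 3) ℂ))
    (hLL : ∀ m n : ℤ, ⁅L m, L n⁆ = ((m : ℂ) - (n : ℂ)) • L (m + n))
    (hLY : ∀ m n : ℤ, ⁅L m, Y n⁆ = (-((m : ℂ) + (n : ℂ))) • Y (m + n))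
    (hLM : ∀ m n : ℤ, ⁅L m, M n⁆ = (-(3 * (m : ℂ) + (n : ℂ))) • M (m + n))
    (hYY : ∀ m n : ℤ, ⁅Y m, Y n⁆ = ((m : ℂ) - (n : ℂ)) • M (m + n))
    (hYM : ∀ m n : ℤ, ⁅Y m, M n⁆ = 0)
    (hMM : ∀ m n : ℤ, ⁅M m, M n⁆ = 0)
    (hL0 : ∀ f : MvPolynomial (Fin 3) ℂ, L 0 f = X 0 * f)
    (hM0 : ∀ f : MvPolynomial (Fin 3) ℂ, M 0 f = X 1 * f)
    (hY0 : ∀ f : MvPolynomial (Fin 3) ℂ, Y 0 f = X 2 * f)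
    (hne : ∀ m : ℤ, M m 1 ≠ 0) :
    ∀ m : ℤ, M m 1 ∈ MvPolynomial.supported ℂ ({1, 2} : Set (Fin 3)) ∧ M m 1 ≠ 0 := by
  -- step 1: commutation facts with the three variables
  have hX0 : ∀ (m : ℤ) (f : MvPolynomial (Fin 3) ℂ),
      M m (X 0 * f) = (X 0 + C (m : ℂ)) * M m f := by
    intro m f
    have h := LinearMap.ext_iff.mp (hLM 0 m) f
    simp only [Ring.lie_def, LinearMap.sub_apply, Module.End.mul_apply, hL0, zero_add,
      Int.cast_zero, mul_zero, LinearMap.smul_apply, smul_eq_C_mul, map_neg] at h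
    rw [add_mul]
    linear_combination -h
  have hX1 : ∀ (m : ℤ) (f : MvPolynomial (Fin 3) ℂ), M m (X 1 * f) = X 1 * M m f := by
    intro m f
    have h := LinearMap.ext_iff.mp (hMM 0 m) f
    simp only [Ring.lie_def, LinearMap.sub_apply, Module.End.mul_apply, hM0,
      LinearMap.zero_apply] at h
    linear_combination -h
  have hX2 : ∀ (m : ℤ) (f : MvPolynomial (Fin 3) ℂ), M m (X 2 * f) = X 2 * M m f := by
    intro m f
    have h := LinearMap.ext_iff.mp (hYM 0 m) f
    simp only [Ring.lie_def, LinearMap.sub_apply, Module.End.mul_apply, hY0,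
      LinearMap.zero_apply] at h
    linear_combination -h
  -- step 2: M m acts by substitution times a_m
  have hact : ∀ (m : ℤ) (u : MvPolynomial (Fin 3) ℂ),
      M m u = aeval ![X 0 + C (m : ℂ), X 1, X 2] u * M m 1 := by
    intro m u
    induction u using MvPolynomial.induction_on with
    | C a =>
      have h1 : (C a : MvPolynomial (Fin 3) ℂ) = a • 1 := by rw [smul_eq_C_mul, mul_one]
      rw [h1, map_smul, map_smul]
      simp
    | add p q hp hq => rw [map_add, map_add, add_mul, hp, hq]
    | mul_X p i hp =>
      fin_cases i
      · show M m (p * X 0) = aeval ![X 0 + C (m : ℂ), X 1, X 2] (p * X 0) * M m 1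
        rw [mul_comm p (X 0), hX0, hp, map_mul, aeval_X]
        simp only [Matrix.cons_val_zero]
        ring
      · show M m (p * X 1) = aeval ![X 0 + C (m : ℂ), X 1, X 2] (p * X 1) * M m 1
        rw [mul_comm p (X 1), hX1, hp, map_mul, aeval_X]
        simp only [Matrix.cons_val_one, Matrix.head_cons, Matrix.cons_val_zero]
        ring
      · show M m (p * X 2) = aeval ![X 0 + C (m : ℂ), X 1, X 2] (p * X 2) * M m 1
        rw [mul_comm p (X 2), hX2, hp, map_mul, aeval_X]
        simp only [Matrix.cons_val_two, Matrix.tail_cons, Matrix.head_cons]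
        ring
  -- step 3: the functional equation
  have hfe : ∀ m n : ℤ,
      aeval ![X 0 + C (m : ℂ), X 1, X 2] (M n 1) * M m 1
        = aeval ![X 0 + C (n : ℂ), X 1, X 2] (M m 1) * M n 1 := by
    intro m n
    have h := LinearMap.ext_iff.mp (hMM m n) 1
    simp only [Ring.lie_def, LinearMap.sub_apply, Module.End.mul_apply,
      LinearMap.zero_apply, sub_eq_zero] at h
    rw [hact m ((M n) 1), hact n ((M m) 1)] at h
    exact h
  -- step 4: transfer to univariate polynomials
  set φ := MvPolynomial.finSuccEquiv ℂ 2 with hφ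
  have hφσ : ∀ (m : ℤ) (u : MvPolynomial (Fin 3) ℂ),
      φ (aeval ![X 0 + C (m : ℂ), X 1, X 2] u)
        = Polynomial.taylor (MvPolynomial.C (m : ℂ)) (φ u) := by
    intro m u
    induction u using MvPolynomial.induction_on with
    | C a =>
      rw [aeval_C]
      have h1 : φ ((algebraMap ℂ (MvPolynomial (Fin 3) ℂ)) a) = Polynomial.C (C a) := by
        simp [hφ, MvPolynomial.finSuccEquiv_apply]
      have h2 : φ (C a) = Polynomial.C (C a) := by
        simp [hφ, MvPolynomial.finSuccEquiv_apply]
      rw [h1, h2, Polynomial.taylor_C]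
    | add p q hp hq => simp only [map_add, hp, hq]
    | mul_X p i hp =>
      rw [map_mul, map_mul, map_mul, Polynomial.taylor_mul, hp]
      refine congrArg (Polynomial.taylor (C (m : ℂ)) (φ p) * ·) ?_
      fin_cases i
      · show φ (aeval ![X 0 + C (m : ℂ), X 1, X 2] (X 0))
            = Polynomial.taylor (MvPolynomial.C (m : ℂ)) (φ (X 0))
        rw [aeval_X]
        simp only [Matrix.cons_val_zero]
        rw [map_add, hφ, MvPolynomial.finSuccEquiv_X_zero, Polynomial.taylor_X]
        refine congrArg (Polynomial.X + ·) ?_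
        simp [MvPolynomial.finSuccEquiv_apply]
      · show φ (aeval ![X 0 + C (m : ℂ), X 1, X 2] (X 1))
            = Polynomial.taylor (MvPolynomial.C (m : ℂ)) (φ (X 1))
        rw [aeval_X]
        simp only [Matrix.cons_val_one, Matrix.head_cons, Matrix.cons_val_zero]
        have h1 : (1 : Fin 3) = Fin.succ 0 := rfl
        rw [h1, hφ, MvPolynomial.finSuccEquiv_X_succ, Polynomial.taylor_C]
      · show φ (aeval ![X 0 + C (m : ℂ), X 1, X 2] (X 2))
            = Polynomial.taylor (MvPolynomial.C (m : ℂ)) (φ (X 2))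
        rw [aeval_X]
        simp only [Matrix.cons_val_two, Matrix.tail_cons, Matrix.head_cons]
        have h2 : (2 : Fin 3) = Fin.succ 1 := rfl
        rw [h2, hφ, MvPolynomial.finSuccEquiv_X_succ, Polynomial.taylor_C]
  have hφne : ∀ m : ℤ, φ (M m 1) ≠ 0 := by
    intro m hz
    exact hne m (by simpa using φ.injective (by simpa using hz))
  -- step 5: degrees vanish
  have hdeg : ∀ m n : ℤ,
      ((φ (M n 1)).natDegree : ℂ) * (m : ℂ) = ((φ (M m 1)).natDegree : ℂ) * (n : ℂ) := by
    intro m n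
    have h := congrArg φ (hfe m n)
    rw [map_mul, map_mul, hφσ m (M n 1), hφσ n (M m 1)] at h
    have hk := tsv_key (φ (M n 1)) (φ (M m 1)) (hφne n) (hφne m)
      (MvPolynomial.C (m : ℂ)) (MvPolynomial.C (n : ℂ)) h
    have : (MvPolynomial.C : ℂ →+* MvPolynomial (Fin 2) ℂ) (((φ (M n 1)).natDegree : ℂ) * (m : ℂ))
        = (MvPolynomial.C : ℂ →+* MvPolynomial (Fin 2) ℂ) (((φ (M m 1)).natDegree : ℂ) * (n : ℂ)) := by
      rw [map_mul, map_mul]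
      rw [← map_natCast (MvPolynomial.C : ℂ →+* MvPolynomial (Fin 2) ℂ),
        ← map_natCast (MvPolynomial.C : ℂ →+* MvPolynomial (Fin 2) ℂ)] at hk
      exact hk
    exact MvPolynomial.C_injective _ _ this
  have hdeg0 : ∀ m : ℤ, (φ (M m 1)).natDegree = 0 := by
    intro m
    rcases eq_or_ne m 0 with rfl | hm
    · have : M (0 : ℤ) 1 = X 1 := by rw [hM0, mul_one]
      rw [this]
      have h1 : φ (X 1 : MvPolynomial (Fin 3) ℂ) = Polynomial.C (X 0) := by
        have : (1 : Fin 3) = Fin.succ 0 := rfl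
        rw [this, MvPolynomial.finSuccEquiv_X_succ]
      rw [h1, Polynomial.natDegree_C]
    · have h := hdeg m (-m)
      have h2 : ((φ (M (-m) 1)).natDegree : ℂ) * (m : ℂ)
          = -(((φ (M m 1)).natDegree : ℂ) * (m : ℂ)) := by push_cast at h ⊢; linear_combination h
      have h3 : ((φ (M (-m) 1)).natDegree : ℂ) + ((φ (M m 1)).natDegree : ℂ) = 0 := by
        have hmc : (m : ℂ) ≠ 0 := Int.cast_ne_zero.mpr hm
        have hz : (((φ (M (-m) 1)).natDegree : ℂ) + ((φ (M m 1)).natDegree : ℂ)) * (m : ℂ) = 0 := by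
          linear_combination h2
        rcases mul_eq_zero.mp hz with h4 | h4
        · exact h4
        · exact absurd h4 hmc
      have h4 : ((φ (M (-m) 1)).natDegree + (φ (M m 1)).natDegree : ℕ) = 0 := by
        exact_mod_cast h3
      omega
  -- step 6: conclude membership in supported
  have hrensucc : ∀ r : MvPolynomial (Fin 2) ℂ, φ (rename Fin.succ r) = Polynomial.C r := by
    intro r
    induction r using MvPolynomial.induction_on with
    | C a =>
      rw [rename_C]
      simp [hφ, MvPolynomial.finSuccEquiv_apply]
    | add p q hp hq => rw [map_add, map_add, hp, hq, map_add]
    | mul_X p i hp => rw [map_mul, map_mul, hp, rename_X, MvPolynomial.finSuccEquiv_X_succ, map_mul]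
  intro m
  refine ⟨?_, hne m⟩
  obtain ⟨r, hr⟩ : ∃ r, φ (M m 1) = Polynomial.C r :=
    ⟨(φ (M m 1)).coeff 0, Polynomial.eq_C_of_natDegree_eq_zero (hdeg0 m)⟩
  have hMm : M m 1 = rename Fin.succ r := by
    apply φ.injective
    rw [hr, hrensucc]
  rw [hMm, MvPolynomial.mem_supported]
  refine subset_trans (Finset.coe_subset.mpr (MvPolynomial.vars_rename _ _)) ?_
  intro x hx
  simp only [Finset.coe_image, Set.mem_image, Finset.mem_coe] at hx
  obtain ⟨j, _, rfl⟩ := hx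
  fin_cases j
  · left; rfl
  · right; rfl
end

section
/- Suppose (c_{m,0}, c_{m,1}) ∈ ℂ² for m ∈ ℤ and (f_{m,1}) ∈ ℂ* satisfy c_{0,0}=0, c_{0,1}=1, f_{0,1}=1, and for all m,n ∈ ℤ: (-3m-n)c_{m+n,1} = -3m c_{n,1} c_{m,1} - n f_{m,1} c_{n,1} and (-3m-n)c_{m+n,0} = -3m c_{n,1} c_{m,0} - n f_{m,1} c_{n,0}, and moreover c_{m,1} ≠ 0 for all m. Then there is λ ∈ ℂ* with c_{m,1} = f_{m,1} = λ^m and c_{m,0} = 0 for all m ∈ ℤ. -/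
/-- The functional-equation step of Lemma 3.6: if `(c_{m,0}, c_{m,1}) ∈ ℂ²` and
`f_{m,1} ∈ ℂ*` satisfy `c_{0,0} = 0`, `c_{0,1} = 1`, `f_{0,1} = 1`,
`(-3m-n) c_{m+n,1} = -3m c_{n,1} c_{m,1} - n f_{m,1} c_{n,1}`,
`(-3m-n) c_{m+n,0} = -3m c_{n,1} c_{m,0} - n f_{m,1} c_{n,0}` for all `m, n ∈ ℤ`,
and `c_{m,1} ≠ 0` for all `m`, then there is `λ ∈ ℂ*` with
`c_{m,1} = f_{m,1} = λ^m` and `c_{m,0} = 0` for all `m ∈ ℤ`. -/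
theorem stmt_12 (c0 c1 f1 : ℤ → ℂ)
    (hc00 : c0 0 = 0) (hc01 : c1 0 = 1) (hf01 : f1 0 = 1)
    (hf1 : ∀ m : ℤ, f1 m ≠ 0)
    (heq1 : ∀ m n : ℤ, ((-3 * m - n : ℤ) : ℂ) * c1 (m + n)
      = -3 * (m : ℂ) * c1 n * c1 m - (n : ℂ) * f1 m * c1 n)
    (heq0 : ∀ m n : ℤ, ((-3 * m - n : ℤ) : ℂ) * c0 (m + n)
      = -3 * (m : ℂ) * c1 n * c0 m - (n : ℂ) * f1 m * c0 n)
    (hc1 : ∀ m : ℤ, c1 m ≠ 0) :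
    ∃ lam : ℂ, lam ≠ 0 ∧ ∀ m : ℤ, c1 m = lam ^ m ∧ f1 m = lam ^ m ∧ c0 m = 0 := by
  have hlam0 : c1 1 ≠ 0 := hc1 1
  -- Step 1: f1 = c1
  have hfc : ∀ m : ℤ, f1 m = c1 m := by
    intro m
    rcases eq_or_ne m 0 with rfl | hm
    · rw [hf01, hc01]
    · have h := heq1 m (-3 * m)
      push_cast at h
      have key : (3 * (m:ℂ) * c1 (-3*m)) * (f1 m - c1 m) = 0 := by
        linear_combination -h
      rcases mul_eq_zero.mp key with h1 | h2
      · exact absurd h1 (mul_ne_zero (mul_ne_zero (by norm_num)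
          (Int.cast_ne_zero.mpr hm)) (hc1 _))
      · linear_combination h2
  -- Step 2: multiplicative step
  have hstep : ∀ m : ℤ, c1 (m + 1) = c1 m * c1 1 := by
    intro m
    have h := heq1 m 1
    rw [hfc m] at h
    have hne : ((-3*m - 1 : ℤ) : ℂ) ≠ 0 := by
      rw [Int.cast_ne_zero]; omega
    apply mul_left_cancel₀ hne
    rw [h]; push_cast; ring
  -- Step 3: c1 m = (c1 1)^m
  have hpow : ∀ m : ℤ, c1 m = c1 1 ^ m := by
    intro m
    induction m using Int.induction_on with
    | zero => simp [hc01]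
    | succ n ih => rw [hstep, ih, zpow_add_one₀ hlam0]
    | pred n ih =>
        have h := hstep (-(n:ℤ) - 1)
        rw [show (-(n:ℤ) - 1 + 1) = -n by ring] at h
        have : c1 (-(n:ℤ) - 1) = c1 (-(n:ℤ)) / c1 1 := by
          field_simp [h]
          exact h.symm
        rw [this, ih, zpow_sub_one₀ hlam0]
        rw [div_eq_mul_inv]
  -- Step 4: c0 = 0
  have hc0 : ∀ m : ℤ, c0 m = 0 := by
    have hE : ∀ m n : ℤ, ((-3*m - n : ℤ) : ℂ) * (c0 (m+n) / c1 1 ^ (m+n))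
        = -3*m*(c0 m / c1 1 ^ m) - n*(c0 n / c1 1 ^ n) := by
      intro m n
      have h := heq0 m n
      rw [hfc m, hpow m, hpow n] at h
      have hm := zpow_ne_zero m hlam0
      have hn := zpow_ne_zero n hlam0
      rw [zpow_add₀ hlam0]
      field_simp
      push_cast [] at h ⊢
      linear_combination h
    intro m
    rcases eq_or_ne m 0 with rfl | hm
    · exact hc00
    · have h1 := hE m (-m)
      have h2 := hE (-m) m
      rw [show m + -m = 0 by ring] at h1
      rw [show -m + m = 0 by ring] at h2
      rw [hc00] at h1 h2
      push_cast at h1 h2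
      have hmc : (m:ℂ) ≠ 0 := Int.cast_ne_zero.mpr hm
      have hpm := zpow_ne_zero m hlam0
      have hnm := zpow_ne_zero (-m) hlam0
      have key : (8:ℂ) * m * (c0 m / c1 1 ^ m) = 0 := by
        linear_combination (3:ℂ) * h1 - h2
      have : c0 m / c1 1 ^ m = 0 := by
        rcases mul_eq_zero.mp key with h | h
        · exact absurd h (mul_ne_zero (by norm_num) hmc)
        · exact h
      exact (div_eq_zero_iff.mp this).resolve_right hpm
  exact ⟨c1 1, hlam0, fun m => ⟨hpow m, (hfc m).trans (hpow m), hc0 m⟩⟩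
end

section
/- Let λ ∈ ℂ*, c_1, c_2 ∈ ℂ, and T_{1,0} ∈ ℂ[M_0]. Suppose the family (T_{m,0})_{m∈ℤ}, T_{0,0}=0, satisfies: λT_{m,0} - λ^{2m+1}T_{-m,0} = m(λ^m T_{1,0} - λ^{m+2}T_{-1,0}) and λT_{m,0} + λ^{2m+1}T_{-m,0} = (m²-1)M_0 λ^m d/dM_0 (T_{1,0} + λ²T_{-1,0}) + λ^m T_{1,0} + λ^{m+2}T_{-1,0} for all m ≠ 0, together with T_{1,0} + λ²T_{-1,0} = c_2 M_0 + c_1. Then for all m ≠ 0, T_{m,0} = λ^{m-1}( m T_{1,0} + (c_2/2)(m² - m)M_0 + (c_1/2)(1 - m) ). -/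
open Polynomial

/-- The closed form of the constant terms `T_{m,0}` in Lemma 3.9: let `λ ∈ ℂ*`,
`c₁, c₂ ∈ ℂ`, `T_{m,0} ∈ ℂ[M₀]` with `T_{0,0} = 0`, satisfying for all `m ≠ 0`
`λ T_{m,0} - λ^{2m+1} T_{-m,0} = m (λ^m T_{1,0} - λ^{m+2} T_{-1,0})` and
`λ T_{m,0} + λ^{2m+1} T_{-m,0} = (m²-1) M₀ λ^m d/dM₀ (T_{1,0} + λ² T_{-1,0})
 + λ^m T_{1,0} + λ^{m+2} T_{-1,0}`, together with `T_{1,0} + λ² T_{-1,0} = c₂ M₀ + c₁`.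
Then for all `m ≠ 0`,
`T_{m,0} = λ^{m-1} (m T_{1,0} + (c₂/2)(m² - m) M₀ + (c₁/2)(1 - m))`. -/
theorem stmt_15 (lam : ℂ) (hlam : lam ≠ 0) (c1 c2 : ℂ)
    (T : ℤ → Polynomial ℂ) (hT0 : T 0 = 0)
    (h1 : ∀ m : ℤ, m ≠ 0 →
      C lam * T m - C (lam ^ (2 * m + 1)) * T (-m)
        = C ((m : ℂ) * lam ^ m) * T 1 - C ((m : ℂ) * lam ^ (m + 2)) * T (-1))
    (h2 : ∀ m : ℤ, m ≠ 0 →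
      C lam * T m + C (lam ^ (2 * m + 1)) * T (-m)
        = C (((m : ℂ) ^ 2 - 1) * lam ^ m)
            * (X * derivative (T 1 + C (lam ^ 2) * T (-1)))
          + C (lam ^ m) * T 1 + C (lam ^ (m + 2)) * T (-1))
    (h3 : T 1 + C (lam ^ 2) * T (-1) = C c2 * X + C c1) :
    ∀ m : ℤ, m ≠ 0 →
      T m = C (lam ^ (m - 1)) *
        (C (m : ℂ) * T 1 + C (c2 / 2 * ((m : ℂ) ^ 2 - (m : ℂ))) * X
          + C (c1 / 2 * (1 - (m : ℂ)))) := by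
  intro m hm
  have e1 : lam ^ (m + 2) = lam ^ m * lam ^ 2 := by
    rw [zpow_add₀ hlam]; norm_cast
  have e2 : lam ^ m = lam ^ (m - 1) * lam := by
    rw [← zpow_add_one₀ hlam, sub_add_cancel]
  have h1' := h1 m hm
  have h2' := h2 m hm
  have hA : C ((m : ℂ) * lam ^ m) = C (m : ℂ) * C (lam ^ m) := by rw [map_mul]
  have hB : C ((m : ℂ) * lam ^ (m + 2))
      = C (m : ℂ) * C (lam ^ m) * C ((lam : ℂ) ^ 2) := by
    rw [e1, map_mul, map_mul, mul_assoc]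
  have hC : C (((m : ℂ) ^ 2 - 1) * lam ^ m)
      = (C (m : ℂ) ^ 2 - 1) * C (lam ^ m) := by
    rw [map_mul, map_sub, map_pow, map_one]
  have hD : C (lam ^ (m + 2)) = C (lam ^ m) * C ((lam : ℂ) ^ 2) := by
    rw [e1, map_mul]
  have hE : C (lam ^ (m - 1)) * C lam = C (lam ^ m) := by
    rw [← map_mul, ← e2]
  have hd : X * derivative (T 1 + C (lam ^ 2) * T (-1)) = C c2 * X := by
    rw [h3, derivative_add, derivative_C, add_zero, derivative_C_mul, derivative_X,
      mul_one, mul_comm]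
  have hc2 : 2 * C (c2 / 2 * ((m : ℂ) ^ 2 - (m : ℂ)))
      = C c2 * (C (m : ℂ) ^ 2 - C (m : ℂ)) := by
    rw [show (2 : Polynomial ℂ) = C 2 from (map_ofNat (C : ℂ →+* Polynomial ℂ) 2).symm,
      ← map_mul, ← map_pow, ← map_sub, ← map_mul]
    exact congrArg C (by ring)
  have hc1 : 2 * C (c1 / 2 * (1 - (m : ℂ))) = C c1 * (1 - C (m : ℂ)) := by
    rw [show (2 : Polynomial ℂ) = C 2 from (map_ofNat (C : ℂ →+* Polynomial ℂ) 2).symm,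
      ← map_mul, ← map_one (C : ℂ →+* Polynomial ℂ), ← map_sub, ← map_mul]
    exact congrArg C (by ring)
  have hF : C (2 * lam) = 2 * C lam := by
    rw [map_mul, map_ofNat]
  rw [hA, hB] at h1'
  rw [hC, hD] at h2'
  apply mul_left_cancel₀ (show (C (2 * lam) : Polynomial ℂ) ≠ 0 by
    simpa using hlam)
  linear_combination h1' + h2'
    + (C (m : ℂ) ^ 2 - 1) * C (lam ^ m) * hd
    + (1 - C (m : ℂ)) * C (lam ^ m) * h3
    - (2 * C (m : ℂ) * T 1 + C c2 * (C (m : ℂ) ^ 2 - C (m : ℂ)) * X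
        + C c1 * (1 - C (m : ℂ))) * hE
    - X * (C (lam ^ (m - 1)) * C lam) * hc2
    - (C (lam ^ (m - 1)) * C lam) * hc1
    + (T m - C (lam ^ (m - 1)) * (C (m : ℂ) * T 1
        + C (c2 / 2 * ((m : ℂ) ^ 2 - (m : ℂ))) * X
        + C (c1 / 2 * (1 - (m : ℂ))))) * hF
end

section
/- Let λ ∈ ℂ* and suppose (e_{m,1})_{m∈ℤ} ⊂ ℂ[M_0] satisfy m λ^m e_{n,1} - n λ^n e_{m,1} = (m-n)λ^{m+n} for all m, n ∈ ℤ, with e_{0,1} = 1 (from p_0 = Y_0). Then there exists T_1 ∈ ℂ[M_0] with e_{m,1} = m λ^m T_1 + λ^m for all m ∈ ℤ. -/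
open Polynomial

/-- Equation (3.19) in Lemma 3.7(b): let `λ ∈ ℂ*` and `(e_{m,1})_{m∈ℤ} ⊂ ℂ[M₀]`
satisfy `m λ^m e_{n,1} - n λ^n e_{m,1} = (m-n) λ^{m+n}` for all `m, n ∈ ℤ`,
with `e_{0,1} = 1`. Then there exists `T₁ ∈ ℂ[M₀]` with
`e_{m,1} = m λ^m T₁ + λ^m` for all `m ∈ ℤ`. -/
theorem stmt_17 (lam : ℂ) (hlam : lam ≠ 0) (e : ℤ → Polynomial ℂ)
    (he0 : e 0 = 1)
    (h : ∀ m n : ℤ, C ((m : ℂ) * lam ^ m) * e n - C ((n : ℂ) * lam ^ n) * e m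
      = C (((m : ℂ) - (n : ℂ)) * lam ^ (m + n))) :
    ∃ T : Polynomial ℂ, ∀ m : ℤ, e m = C ((m : ℂ) * lam ^ m) * T + C (lam ^ m) := by
  refine ⟨C lam⁻¹ * e 1 - 1, fun m => ?_⟩
  have hm := h m 1
  have hC : (C lam : Polynomial ℂ) ≠ 0 := by simpa using hlam
  have hp : lam ^ (m + 1) = lam * lam ^ m := by
    rw [zpow_add₀ hlam, zpow_one]; ring
  have h1 : (C lam : Polynomial ℂ) * C lam⁻¹ = 1 := by
    rw [← C_mul, mul_inv_cancel₀ hlam, C_1]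
  rw [hp] at hm
  simp only [Int.cast_one, one_mul, zpow_one] at hm
  apply mul_left_cancel₀ hC
  simp only [C_mul, C_sub, C_1] at hm ⊢
  linear_combination -hm - (C ((m : ℂ)) * C (lam ^ m) * e 1) * h1
end
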